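/- arXiv:2601.19683 — 3 statements merged into one kernel-verified Lean document; each statement's English description precedes it below -/
import Mathlib

section
/- Let f: ℝ → ℝ be continuous at t₀ but not differentiable at t₀, and let g: ℝ² → ℝ be differentiable at (t₀, f(t₀)) with ∂g/∂u (t₀, f(t₀)) ≠ 0. Then the composed function t ↦ g(t, f(t)) is not differentiable at t₀. -/
open Asymptotics Filter

theorem stmt0 (f : ℝ → ℝ) (g : ℝ × ℝ → ℝ) (t₀ : ℝ)
    (hf_cont : ContinuousAt f t₀)
    (hf_ndiff : ¬ DifferentiableAt ℝ f t₀)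
    (hg : DifferentiableAt ℝ g (t₀, f t₀))
    (hgu : fderiv ℝ g (t₀, f t₀) (0, 1) ≠ 0) :
    ¬ DifferentiableAt ℝ (fun t => g (t, f t)) t₀ := by
  intro hdiff
  set L := fderiv ℝ g (t₀, f t₀) with hL
  set a : ℝ := L (1, 0) with ha
  set b : ℝ := L (0, 1) with hb
  have hbne : b ≠ 0 := hgu
  have hbpos : (0:ℝ) < ‖b‖ := norm_pos_iff.mpr hbne
  have hLxy : ∀ x y : ℝ, L (x, y) = x * a + y * b := by
    intro x y
    have hxy : ((x, y) : ℝ × ℝ) = x • ((1:ℝ), (0:ℝ)) + y • ((0:ℝ), (1:ℝ)) := by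
      simp [Prod.ext_iff]
    rw [hxy, map_add, map_smul, map_smul, smul_eq_mul, smul_eq_mul]
  set d : ℝ := deriv (fun t => g (t, f t)) t₀ with hd
  set v : ℝ → ℝ × ℝ := fun t => ((t, f t) - (t₀, f t₀)) with hv
  have htend : Tendsto (fun t => (t, f t)) (nhds t₀) (nhds (t₀, f t₀)) :=
    (continuousAt_id.prodMk hf_cont)
  have o1 : (fun t => g (t, f t) - g (t₀, f t₀) - L (v t)) =o[nhds t₀] v := by
    have := (hg.hasFDerivAt.isLittleO).comp_tendsto htend
    simpa [hv, Function.comp_def, ← map_sub] using this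
  have hdd : HasDerivAt (fun t => g (t, f t)) d t₀ := hdiff.hasDerivAt
  have o2 : (fun t => g (t, f t) - g (t₀, f t₀) - (t - t₀) * d) =o[nhds t₀]
      (fun t => t - t₀) := by
    have := hasDerivAt_iff_isLittleO.mp hdd
    simpa [smul_eq_mul] using this
  have bigO_t : (fun t : ℝ => t - t₀) =O[nhds t₀] v := by
    apply isBigO_of_le
    intro t
    have h : ‖t - t₀‖ = ‖(v t).1‖ := by simp [hv]
    rw [h]
    exact norm_fst_le (v t)
  set E : ℝ → ℝ := fun t => b * (f t - f t₀) - (d - a) * (t - t₀) with hE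
  have oE : E =o[nhds t₀] v := by
    have h := (o2.trans_isBigO bigO_t).sub o1
    have heq : (fun t => (g (t, f t) - g (t₀, f t₀) - (t - t₀) * d) -
        (g (t, f t) - g (t₀, f t₀) - L (v t))) = E := by
      funext t
      simp only [hE, hv]
      rw [hLxy]
      simp only [Prod.fst_sub, Prod.snd_sub]
      ring
    rwa [heq] at h
  have bigO_v : v =O[nhds t₀] (fun t : ℝ => t - t₀) := by
    have hb2 : (0:ℝ) < ‖b‖ / 2 := by positivity
    have hev := oE.def hb2
    rw [isBigO_iff]
    refine ⟨2 * (1 + ‖d - a‖ / ‖b‖), ?_⟩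
    filter_upwards [hev] with t ht
    have hfb : ‖f t - f t₀‖ ≤ ‖v t‖ / 2 + ‖d - a‖ / ‖b‖ * ‖t - t₀‖ := by
      have h3 : ‖b‖ * ‖f t - f t₀‖ ≤ ‖b‖ / 2 * ‖v t‖ + ‖d - a‖ * ‖t - t₀‖ := by
        rw [← norm_mul]
        have heq2 : b * (f t - f t₀) = E t + (d - a) * (t - t₀) := by
          simp only [hE]; ring
        calc ‖b * (f t - f t₀)‖ ≤ ‖E t‖ + ‖(d - a) * (t - t₀)‖ := by
              rw [heq2]; exact norm_add_le _ _
          _ ≤ ‖b‖ / 2 * ‖v t‖ + ‖d - a‖ * ‖t - t₀‖ := by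
              rw [norm_mul]; exact add_le_add ht le_rfl
      rw [← mul_le_mul_iff_right₀ hbpos]
      have hrw : ‖b‖ * (‖v t‖ / 2 + ‖d - a‖ / ‖b‖ * ‖t - t₀‖)
          = ‖b‖ / 2 * ‖v t‖ + ‖d - a‖ * ‖t - t₀‖ := by
        field_simp
      rw [hrw]; exact h3
    have hvle : ‖v t‖ ≤ ‖t - t₀‖ + ‖f t - f t₀‖ := by
      have h : v t = ((t - t₀, f t - f t₀) : ℝ × ℝ) := by simp [hv, Prod.ext_iff]
      rw [h, Prod.norm_def]
      exact max_le (le_add_of_nonneg_right (norm_nonneg _))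
        (le_add_of_nonneg_left (norm_nonneg _))
    have hk : (0:ℝ) ≤ ‖d - a‖ / ‖b‖ := by positivity
    linarith
  have oE' : E =o[nhds t₀] (fun t : ℝ => t - t₀) := oE.trans_isBigO bigO_v
  have oF : (fun t => f t - f t₀ - (t - t₀) • ((d - a) / b)) =o[nhds t₀]
      (fun t : ℝ => t - t₀) := by
    have h := oE'.const_mul_left b⁻¹
    have heq : (fun t => b⁻¹ * E t)
        = (fun t => f t - f t₀ - (t - t₀) • ((d - a) / b)) := by
      funext t
      simp only [hE, smul_eq_mul]
      field_simp
    rwa [heq] at h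
  exact hf_ndiff (hasDerivAt_iff_isLittleO.mpr oF).differentiableAt
end

section
/- For x = (x₁, x₂) ∈ ℝ² with x₂ ≠ 0, define the single-layer potential over the segment [0,1]×{0}: f(x) = (1/(2π)) ∫₀¹ log‖x − (t,0)‖ dt. Then for a fixed x₁ ∈ (0,1), the one-sided normal derivatives of s ↦ f(x₁, s) at s = 0 satisfy ∂f/∂n⁺ − ∂f/∂n⁻ = 1, where n = (0,1); i.e., the single-layer potential with unit density has a unit jump of its normal derivative across the segment. -/
open Real MeasureTheory Set Filter Topology

-- integrability of log on [0,c]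
lemma myIntLog {c : ℝ} (hc0 : 0 ≤ c) (hc1 : c ≤ 1) :
    IntervalIntegrable Real.log volume 0 c := by
  rw [intervalIntegrable_iff_integrableOn_Ioc_of_le hc0]
  have hg : IntegrableOn (fun x : ℝ => 2 * x ^ (-(1/2) : ℝ)) (Set.Ioc 0 c) volume := by
    have h := (intervalIntegral.intervalIntegrable_rpow' (r := -(1/2)) (by norm_num) (a := 0) (b := c))
    rw [intervalIntegrable_iff_integrableOn_Ioc_of_le hc0] at h
    exact h.const_mul 2
  refine hg.mono' Real.measurable_log.aestronglyMeasurable ?_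
  rw [ae_restrict_iff' measurableSet_Ioc]
  filter_upwards with x hx
  have hx0 : 0 < x := hx.1
  have hx1 : x ≤ 1 := hx.2.trans hc1
  have hr : (0:ℝ) < x ^ (-(1/2) : ℝ) := Real.rpow_pos_of_pos hx0 _
  have h1 : Real.log (x ^ (-(1/2) : ℝ)) = -(1/2) * Real.log x := Real.log_rpow hx0 _
  have h2 : Real.log (x ^ (-(1/2) : ℝ)) ≤ x ^ (-(1/2) : ℝ) := by
    have := Real.log_le_sub_one_of_pos hr
    linarith
  have h3 : Real.log x ≤ 0 := Real.log_nonpos hx0.le hx1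
  rw [Real.norm_eq_abs, abs_of_nonpos h3]
  nlinarith

lemma myIntegralLog {c : ℝ} (hc0 : 0 < c) (hc1 : c ≤ 1) :
    ∫ x in (0:ℝ)..c, Real.log x = c * Real.log c - c := by
  have hderiv : ∀ x ∈ Set.Ioo (0:ℝ) c,
      HasDerivAt (fun x : ℝ => x * Real.log x - x) (Real.log x) x := by
    intro x hx
    have hx0 : (0:ℝ) < x := hx.1
    have h := ((hasDerivAt_id x).mul (Real.hasDerivAt_log hx0.ne')).sub (hasDerivAt_id x)
    refine h.congr_deriv ?_
    field_simp
    simp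
  have ha : Tendsto (fun x : ℝ => x * Real.log x - x) (𝓝[>] (0:ℝ)) (𝓝 0) := by
    have h1 := tendsto_log_mul_rpow_nhdsGT_zero (one_pos)
    have h2 : Tendsto (fun x : ℝ => x * Real.log x) (𝓝[>] (0:ℝ)) (𝓝 0) := by
      refine h1.congr' ?_
      filter_upwards [self_mem_nhdsWithin] with x hx
      rw [Real.rpow_one, mul_comm]
    have h3 : Tendsto (fun x : ℝ => x) (𝓝[>] (0:ℝ)) (𝓝 0) :=
      tendsto_id.mono_left nhdsWithin_le_nhds
    simpa using h2.sub h3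
  have hb : Tendsto (fun x : ℝ => x * Real.log x - x) (𝓝[<] c) (𝓝 (c * Real.log c - c)) := by
    have : ContinuousAt (fun x : ℝ => x * Real.log x - x) c :=
      (continuousAt_id.mul (Real.continuousAt_log hc0.ne')).sub continuousAt_id
    exact this.continuousWithinAt.tendsto
  have := intervalIntegral.integral_eq_sub_of_hasDerivAt_of_tendsto hc0 hderiv
    (myIntLog hc0.le hc1) ha hb
  simpa using this

lemma myKey (c s : ℝ) (hc0 : 0 < c) (hc1 : c < 1) :
    ∫ t in (0:ℝ)..1, Real.log (Real.sqrt ((c - t) ^ 2 + s ^ 2)) =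
      (1 - c) / 2 * Real.log ((1 - c) ^ 2 + s ^ 2) + c / 2 * Real.log (c ^ 2 + s ^ 2) - 1
        + s * Real.arctan ((1 - c) / s) + s * Real.arctan (c / s) := by
  rcases eq_or_ne s 0 with rfl | hs
  · -- s = 0
    have h1 : ∀ t ∈ Set.uIcc (0:ℝ) 1, (fun t => Real.log (Real.sqrt ((c - t) ^ 2 + 0 ^ 2))) t
        = Real.log (c - t) := by
      intro t _
      simp only [show (c - t) ^ 2 + 0 ^ 2 = (c - t) ^ 2 by ring, Real.sqrt_sq_eq_abs,
        Real.log_abs]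
    rw [intervalIntegral.integral_congr h1,
      intervalIntegral.integral_comp_sub_left Real.log c]
    have i2 : IntervalIntegrable Real.log volume 0 c := myIntLog hc0.le hc1.le
    have i1 : IntervalIntegrable Real.log volume (c - 1) 0 := by
      have h := (IntervalIntegrable.iff_comp_neg (f := Real.log)).mp
        (myIntLog (by linarith : (0:ℝ) ≤ 1 - c) (by linarith))
      rw [show (fun x : ℝ => Real.log (-x)) = Real.log from
        funext fun x => Real.log_neg_eq_log x] at h
      simpa [show -(1 - c) = c - 1 by ring] using h.symm
    have e1 : (∫ x in (c - 1:ℝ)..0, Real.log x) = (1 - c) * Real.log (1 - c) - (1 - c) := by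
      have h := intervalIntegral.integral_comp_neg (a := (0:ℝ)) (b := 1 - c) Real.log
      simp only [neg_zero] at h
      rw [show c - 1 = -(1 - c) by ring, ← h]
      have h2 : ∀ t ∈ Set.uIcc (0:ℝ) (1-c), (fun x => Real.log (-x)) t = Real.log t := by
        intro t _; exact Real.log_neg_eq_log t
      rw [intervalIntegral.integral_congr h2, myIntegralLog (by linarith) (by linarith)]
    have e2 : (∫ x in (0:ℝ)..c, Real.log x) = c * Real.log c - c :=
      myIntegralLog hc0 hc1.le
    rw [show c - 0 = c by ring, ← intervalIntegral.integral_add_adjacent_intervals i1 i2,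
      e1, e2]
    have l1 : Real.log ((1 - c) ^ 2 + 0 ^ 2) = 2 * Real.log (1 - c) := by
      rw [show (1 - c) ^ 2 + 0 ^ 2 = (1 - c) ^ 2 by ring, Real.log_pow]; norm_num
    have l2 : Real.log (c ^ 2 + 0 ^ 2) = 2 * Real.log c := by
      rw [show c ^ 2 + 0 ^ 2 = c ^ 2 by ring, Real.log_pow]; norm_num
    rw [l1, l2]
    ring
  · -- s ≠ 0
    have hs2 : 0 < s ^ 2 := by positivity
    set H : ℝ → ℝ := fun t =>
      (t - c) / 2 * Real.log ((t - c) ^ 2 + s ^ 2) - t + s * Real.arctan ((t - c) / s) with hH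
    have hderiv : ∀ t ∈ Set.uIcc (0:ℝ) 1,
        HasDerivAt H (Real.log (Real.sqrt ((c - t) ^ 2 + s ^ 2))) t := by
      intro t _
      have hD : 0 < (t - c) ^ 2 + s ^ 2 := by positivity
      have h1 : HasDerivAt (fun t : ℝ => (t - c) ^ 2 + s ^ 2) (2 * (t - c)) t := by
        simpa using (((hasDerivAt_id t).sub_const c).pow 2).add_const (s ^ 2)
      have h2 := h1.log hD.ne'
      have h3 : HasDerivAt (fun t : ℝ => (t - c) / 2) (1 / 2) t :=
        ((hasDerivAt_id t).sub_const c).div_const 2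
      have h4 := h3.mul h2
      have h5 : HasDerivAt (fun t : ℝ => (t - c) / s) (1 / s) t :=
        ((hasDerivAt_id t).sub_const c).div_const s
      have h6 := (h5.arctan).const_mul s
      have htot := (h4.sub (hasDerivAt_id t)).add h6
      refine htot.congr_deriv ?_
      rw [show (c - t) ^ 2 = (t - c) ^ 2 by ring, Real.log_sqrt hD.le]
      have hden : (1 : ℝ) + ((t - c) / s) ^ 2 ≠ 0 := by positivity
      field_simp
      ring
    have hint : IntervalIntegrable (fun t => Real.log (Real.sqrt ((c - t) ^ 2 + s ^ 2)))
        volume 0 1 := by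
      apply Continuous.intervalIntegrable
      refine Continuous.log (by continuity) fun t => ?_
      exact (Real.sqrt_pos.mpr (by positivity)).ne'
    rw [intervalIntegral.integral_eq_sub_of_hasDerivAt hderiv hint, hH]
    simp only [zero_sub, neg_div, Real.arctan_neg, neg_sq]
    ring

lemma myArctanRight {k : ℝ} (hk : 0 < k) :
    HasDerivWithinAt (fun s : ℝ => s * Real.arctan (k / s)) (π / 2) (Set.Ici 0) 0 := by
  rw [hasDerivWithinAt_iff_tendsto_slope]
  have hset : Set.Ici (0:ℝ) \ {0} = Set.Ioi 0 := by
    ext x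
    simp [lt_iff_le_and_ne, eq_comm]
  rw [hset]
  have hcg : ∀ᶠ y in 𝓝[Set.Ioi (0:ℝ)] 0,
      Real.arctan (k / y) = slope (fun s : ℝ => s * Real.arctan (k / s)) 0 y := by
    filter_upwards [self_mem_nhdsWithin] with y hy
    have hy0 : (y:ℝ) ≠ 0 := ne_of_gt hy
    simp only [slope_def_field]
    field_simp
    ring
  refine Tendsto.congr' hcg ?_
  have h1 : Tendsto (fun y : ℝ => k / y) (𝓝[>] 0) atTop := by
    simp only [div_eq_mul_inv]
    exact tendsto_inv_nhdsGT_zero.const_mul_atTop hk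
  exact (Real.tendsto_arctan_atTop.mono_right nhdsWithin_le_nhds).comp h1

/-- Unit jump of the normal derivative of the 2D single-layer potential with unit
density across the open segment `(0,1) × {0}`. -/
theorem stmt17 (x₁ : ℝ) (hx₁ : x₁ ∈ Set.Ioo (0 : ℝ) 1) :
    ∃ a b : ℝ,
      HasDerivWithinAt
        (fun s : ℝ =>
          (1 / (2 * π)) * ∫ t in (0 : ℝ)..1, Real.log (Real.sqrt ((x₁ - t) ^ 2 + s ^ 2)))
        a (Set.Ici 0) 0 ∧
      HasDerivWithinAt
        (fun s : ℝ =>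
          (1 / (2 * π)) * ∫ t in (0 : ℝ)..1, Real.log (Real.sqrt ((x₁ - t) ^ 2 + s ^ 2)))
        b (Set.Iic 0) 0 ∧
      a - b = 1 := by
  obtain ⟨hc0, hc1⟩ := hx₁
  set F : ℝ → ℝ := fun s : ℝ =>
    (1 / (2 * π)) * ∫ t in (0 : ℝ)..1, Real.log (Real.sqrt ((x₁ - t) ^ 2 + s ^ 2)) with hFdef
  set G : ℝ → ℝ := fun s : ℝ =>
    (1 / (2 * π)) * ((1 - x₁) / 2 * Real.log ((1 - x₁) ^ 2 + s ^ 2)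
      + x₁ / 2 * Real.log (x₁ ^ 2 + s ^ 2) - 1
      + s * Real.arctan ((1 - x₁) / s) + s * Real.arctan (x₁ / s)) with hGdef
  have hFG : ∀ s, F s = G s := fun s => by
    rw [hFdef, hGdef]
    simp only
    rw [myKey x₁ s hc0 hc1]
  -- derivative of the log terms at 0
  have hlog : ∀ k : ℝ, k ≠ 0 → HasDerivAt (fun s : ℝ => Real.log (k ^ 2 + s ^ 2)) 0 0 := by
    intro k hk
    have h1 : HasDerivAt (fun s : ℝ => k ^ 2 + s ^ 2) 0 0 := by
      simpa using ((hasDerivAt_id (0:ℝ)).pow 2).const_add (k ^ 2)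
    have hpos : (0:ℝ) < k ^ 2 + 0 ^ 2 := by positivity
    simpa using h1.log hpos.ne'
  have h1c : (0:ℝ) < 1 - x₁ := by linarith
  -- right derivative of G
  have hGright : HasDerivWithinAt G
      (1 / (2 * π) * ((1 - x₁) / 2 * 0 + x₁ / 2 * 0 + π / 2 + π / 2)) (Set.Ici 0) 0 := by
    rw [hGdef]
    exact (((((hlog _ h1c.ne').hasDerivWithinAt.const_mul ((1 - x₁) / 2)).add
      ((hlog _ hc0.ne').hasDerivWithinAt.const_mul (x₁ / 2))).sub_const 1).add
      (myArctanRight h1c) |>.add (myArctanRight hc0)).const_mul (1 / (2 * π))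
  have ha : HasDerivWithinAt F (1 / 2) (Set.Ici 0) 0 := by
    have h := hGright.congr (fun y _ => hFG y) (hFG 0)
    refine h.congr_deriv ?_
    field_simp
    ring
  -- left derivative via evenness
  have hneg : HasDerivWithinAt (fun s : ℝ => -s) (-1) (Set.Iic (0:ℝ)) 0 :=
    (hasDerivAt_neg (0:ℝ)).hasDerivWithinAt
  have hmaps : Set.MapsTo (fun s : ℝ => -s) (Set.Iic 0) (Set.Ici 0) := fun x hx => by
    simpa using hx
  have h0 : HasDerivWithinAt F (1 / 2) (Set.Ici 0) ((fun s : ℝ => -s) 0) := by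
    simpa using ha
  have hcomp := h0.comp 0 hneg hmaps
  have heven : ∀ y : ℝ, (F ∘ fun s : ℝ => -s) y = F y := by
    intro y
    simp only [Function.comp_apply, hFdef, neg_sq]
  have hb : HasDerivWithinAt F (-(1 / 2)) (Set.Iic 0) 0 := by
    have h := hcomp.congr (fun y _ => (heven y).symm) (heven 0).symm
    refine h.congr_deriv ?_
    norm_num
  exact ⟨1 / 2, -(1 / 2), ha, hb, by norm_num⟩
end

section
/- Let g: ℝⁿ × ℝᵏ → ℝ be C¹ and f: ℝⁿ → ℝᵏ be continuous, and suppose that for every x in an open set U the function y ↦ g(y, f(y)) is differentiable at x while f is not differentiable at x. Then for each such x, the partial differential D₂g(x, f(x)) annihilates all jump directions of f; in particular if k = 1 and D₂g(x, f(x)) ≠ 0, then f must be differentiable at x (contrapositive of the propagation theorem in several variables). -/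
theorem stmt18 (n : ℕ) (g : (Fin n → ℝ) × ℝ → ℝ) (f : (Fin n → ℝ) → ℝ)
    (hg : ContDiff ℝ 1 g) (hf : Continuous f) (x : Fin n → ℝ)
    (hgu : fderiv ℝ g (x, f x) (0, 1) ≠ 0)
    (hcomp : DifferentiableAt ℝ (fun y => g (y, f y)) x) :
    DifferentiableAt ℝ f x := by
  
  set Dg := fderiv ℝ g (x, f x) with hDg
  set b : ℝ := Dg (0, 1) with hb
  have hb0 : b ≠ 0 := hgu
  have hstrict : HasStrictFDerivAt g Dg (x, f x) := hg.hasStrictFDerivAt one_ne_zero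
  -- decomposition of Dg
  have hsplit : ∀ v : (Fin n → ℝ), ∀ w : ℝ, Dg (v, w) = Dg (v, 0) + w * b := by
    intro v w
    have : (v, w) = (v, (0:ℝ)) + w • ((0:(Fin n → ℝ)), (1:ℝ)) := by
      simp [Prod.ext_iff]
    rw [this, map_add, map_smul]
    simp [hb, mul_comm]
  -- the linear equivalence (v, w) ↦ (v, Dg (v, w))
  set L : ((Fin n → ℝ) × ℝ) →L[ℝ] ((Fin n → ℝ) × ℝ) := (ContinuousLinearMap.fst ℝ (Fin n → ℝ) ℝ).prod Dg with hL
  set M : ((Fin n → ℝ) × ℝ) →L[ℝ] ((Fin n → ℝ) × ℝ) :=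
    (ContinuousLinearMap.fst ℝ (Fin n → ℝ) ℝ).prod
      (b⁻¹ • ((ContinuousLinearMap.snd ℝ (Fin n → ℝ) ℝ) - Dg.comp
        ((ContinuousLinearMap.fst ℝ (Fin n → ℝ) ℝ).prod 0))) with hM
  have hLM : ∀ p : (Fin n → ℝ) × ℝ, M (L p) = p := by
    rintro ⟨v, w⟩
    simp only [hL, hM, ContinuousLinearMap.prod_apply, ContinuousLinearMap.coe_fst',
      ContinuousLinearMap.smul_apply, ContinuousLinearMap.sub_apply,
      ContinuousLinearMap.coe_snd', ContinuousLinearMap.comp_apply,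
      ContinuousLinearMap.zero_apply, smul_eq_mul]
    refine Prod.ext rfl ?_
    simp only [hsplit v w]
    field_simp
    ring
  have hML : ∀ p : (Fin n → ℝ) × ℝ, L (M p) = p := by
    rintro ⟨v, u⟩
    simp only [hL, hM, ContinuousLinearMap.prod_apply, ContinuousLinearMap.coe_fst',
      ContinuousLinearMap.smul_apply, ContinuousLinearMap.sub_apply,
      ContinuousLinearMap.coe_snd', ContinuousLinearMap.comp_apply,
      ContinuousLinearMap.zero_apply, smul_eq_mul]
    refine Prod.ext rfl ?_
    rw [hsplit]
    field_simp
    ring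
  set Leq : ((Fin n → ℝ) × ℝ) ≃L[ℝ] ((Fin n → ℝ) × ℝ) := ContinuousLinearEquiv.equivOfInverse L M hLM hML
    with hLeq
  set Φ : ((Fin n → ℝ) × ℝ) → ((Fin n → ℝ) × ℝ) := fun p => (p.1, g p) with hΦdef
  have hΦ : HasStrictFDerivAt Φ (Leq : ((Fin n → ℝ) × ℝ) →L[ℝ] ((Fin n → ℝ) × ℝ)) (x, f x) := by
    have h1 : HasStrictFDerivAt Φ L (x, f x) := HasStrictFDerivAt.prodMk hasStrictFDerivAt_fst hstrict
    convert h1 using 1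
    rfl
  set Ψ := hΦ.localInverse Φ _ _ with hΨ
  have hinv : ∀ᶠ p in nhds (x, f x), Ψ (Φ p) = p := hΦ.eventually_left_inverse
  have hcont : ContinuousAt (fun y : (Fin n → ℝ) => (y, f y)) x :=
    (continuous_id.prodMk hf).continuousAt
  have hev : ∀ᶠ y in nhds x, Ψ (y, g (y, f y)) = (y, f y) := by
    filter_upwards [hcont hinv] with y hy using hy
  have heq : (fun y : (Fin n → ℝ) => (Ψ (y, g (y, f y))).2) =ᶠ[nhds x] f := by
    filter_upwards [hev] with y hy
    rw [hy]
  have hΨdiff : DifferentiableAt ℝ Ψ (x, g (x, f x)) :=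
    hΦ.to_localInverse.differentiableAt
  have hmap : DifferentiableAt ℝ (fun y : (Fin n → ℝ) => (y, g (y, f y))) x :=
    differentiableAt_id.prodMk hcomp
  have hdiff : DifferentiableAt ℝ (fun y : (Fin n → ℝ) => (Ψ (y, g (y, f y))).2) x :=
    (hΨdiff.comp x hmap).snd
  exact heq.differentiableAt_iff.mp hdiff
end
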